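/- arXiv:1703.01903 — 2 statements merged into one kernel-verified Lean document; each statement's English description precedes it below -/
import Mathlib

section
/- For complex α, β with appropriate conditions and |z| < 1, ∑_{k=0}^∞ (Γ(k+α)/Γ(k+1)) ₁F₁(α+k, β, x) z^k = (1-z)^{-α} Γ(α) ₁F₁(α, β, x/(1-z)). -/
open Complex Metric Finset

set_option maxHeartbeats 1000000

lemma cgamma_add_nat (s : ℂ) (hs : 0 < s.re) (n : ℕ) :
    Complex.Gamma (s + n) = Complex.Gamma s * ∏ j ∈ Finset.range n, (s + j) := by
  induction n with
  | zero => simp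
  | succ n ih =>
    have hre : 0 < (s + n).re := by
      simp only [Complex.add_re, Complex.natCast_re]
      positivity
    have hne : s + (n : ℂ) ≠ 0 := fun h => by rw [h] at hre; simp at hre
    have : s + ((n + 1 : ℕ) : ℂ) = (s + n) + 1 := by push_cast; ring
    rw [this, Complex.Gamma_add_one _ hne, ih, Finset.prod_range_succ]
    ring

lemma rgamma_add_nat (x : ℝ) (hx : 0 < x) (n : ℕ) :
    Real.Gamma (x + n) = Real.Gamma x * ∏ j ∈ Finset.range n, (x + j) := by
  induction n with
  | zero => simp
  | succ n ih =>
    have hre : 0 < x + (n : ℝ) := by positivity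
    have : x + ((n + 1 : ℕ) : ℝ) = (x + n) + 1 := by push_cast; ring
    rw [this, Real.Gamma_add_one hre.ne', ih, Finset.prod_range_succ]
    ring

lemma abs_cgamma_le (s : ℂ) (hs : 0 < s.re) :
    ‖Complex.Gamma s‖ ≤ Real.Gamma s.re := by
  rw [Complex.Gamma_eq_integral hs, Real.Gamma_eq_integral hs, Complex.GammaIntegral]
  rw [show ‖∫ x in Set.Ioi (0:ℝ), ((Real.exp (-x) : ℝ) : ℂ) * (x:ℂ) ^ (s - 1)‖ =
      ‖∫ x in Set.Ioi (0:ℝ), ((Real.exp (-x) : ℝ) : ℂ) * (x:ℂ) ^ (s - 1)‖ from rfl]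
  refine (MeasureTheory.norm_integral_le_integral_norm _).trans (le_of_eq ?_)
  refine MeasureTheory.setIntegral_congr_fun measurableSet_Ioi (fun t ht => ?_)
  rw [Set.mem_Ioi] at ht
  rw [norm_mul, Complex.norm_real, Real.norm_of_nonneg (Real.exp_nonneg _),
    Complex.norm_cpow_eq_rpow_re_of_pos ht]
  simp [Complex.sub_re]

lemma hasSum_binomial (a : ℂ) (ha : 0 < a.re) {z : ℂ} (hz : ‖z‖ < 1) :
    HasSum (fun k : ℕ => Complex.Gamma (a + k) / (Nat.factorial k : ℂ) * z ^ k)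
      (Complex.Gamma a * (1 - z) ^ (-a)) := by
  have hΓa : Complex.Gamma a ≠ 0 := Complex.Gamma_ne_zero_of_re_pos ha
  set S : Set ℂ := (fun w => 1 - w) ⁻¹' Complex.slitPlane with hSdef
  have hSopen : IsOpen S := Complex.isOpen_slitPlane.preimage (continuous_const.sub continuous_id)
  have hball : ball (0 : ℂ) 1 ⊆ S := by
    intro w hw
    rw [mem_ball_zero_iff] at hw
    refine Complex.mem_slitPlane_iff.mpr (Or.inl ?_)
    have : w.re ≤ ‖w‖ := (Complex.re_le_norm w)
    simp only [Complex.sub_re, Complex.one_re]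
    linarith
  set h : ℂ → ℂ := fun w => (1 - w) ^ (-a) with hhdef
  have hdiff : ∀ w ∈ S, DifferentiableAt ℂ h w := by
    intro w hw
    exact (((hasDerivAt_id w).const_sub 1).cpow_const hw).differentiableAt
  have key : ∀ n : ℕ, Set.EqOn (iteratedDeriv n h)
      (fun w => Complex.Gamma (a + n) / Complex.Gamma a * (1 - w) ^ (-a - n)) S := by
    intro n
    induction n with
    | zero =>
      intro w hw
      simp [iteratedDeriv_zero, hhdef, div_self hΓa]
    | succ n ih =>
      intro w hw
      rw [iteratedDeriv_succ]
      have h1 : deriv (iteratedDeriv n h) w =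
          deriv (fun w => Complex.Gamma (a + n) / Complex.Gamma a * (1 - w) ^ (-a - n)) w :=
        Filter.EventuallyEq.deriv_eq (ih.eventuallyEq_of_mem (hSopen.mem_nhds hw))
      have hd : HasDerivAt (fun w => (1 - w) ^ (-a - n))
          ((-a - n) * (1 - w) ^ (-a - n - 1) * (-1)) w :=
        ((hasDerivAt_id w).const_sub 1).cpow_const hw
      have h2 := (hd.const_mul (Complex.Gamma (a + n) / Complex.Gamma a)).deriv
      rw [h1, h2]
      have hane : a + (n : ℂ) ≠ 0 := by
        intro hc
        have : 0 < (a + (n : ℂ)).re := by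
          simp only [Complex.add_re, Complex.natCast_re]; positivity
        rw [hc] at this; simp at this
      have hΓs : Complex.Gamma (a + ((n : ℕ) + 1 : ℕ)) = (a + n) * Complex.Gamma (a + n) := by
        rw [show (a + ((n : ℕ) + 1 : ℕ) : ℂ) = (a + n) + 1 by push_cast; ring,
          Complex.Gamma_add_one _ hane]
      rw [hΓs, show (-a - ((n + 1 : ℕ) : ℂ)) = -a - n - 1 by push_cast; ring]
      field_simp
      ring
  have hdOn : DifferentiableOn ℂ h (ball (0 : ℂ) 1) :=
    fun w hw => (hdiff w (hball hw)).differentiableWithinAt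
  have hzball : z ∈ ball (0 : ℂ) 1 := mem_ball_zero_iff.mpr hz
  have H := Complex.hasSum_taylorSeries_on_ball hdOn hzball
  have h0S : (0 : ℂ) ∈ S := hball (mem_ball_self one_pos)
  have hiter : ∀ n : ℕ, iteratedDeriv n h 0 = Complex.Gamma (a + n) / Complex.Gamma a := by
    intro n
    rw [key n h0S]
    simp
  have hval : h z = (1 - z) ^ (-a) := rfl
  rw [hval] at H
  have H2 := H.mul_left (Complex.Gamma a)
  convert H2 using 2 with n
  · rfl
  rw [hiter n]
  have hfac : ((n.factorial : ℂ)) ≠ 0 := Nat.cast_ne_zero.mpr n.factorial_ne_zero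
  simp only [sub_zero, smul_eq_mul]
  field_simp

lemma hasSum_binomial_real (r : ℝ) (hr : 0 < r) {v : ℝ} (hv0 : 0 ≤ v) (hv : v < 1) :
    HasSum (fun k : ℕ => Real.Gamma (r + k) / (Nat.factorial k : ℝ) * v ^ k)
      (Real.Gamma r * (1 - v) ^ (-r)) := by
  rw [← Complex.hasSum_ofReal]
  have habs : ‖((v : ℂ))‖ < 1 := by
    rw [Complex.norm_real]; rw [Real.norm_of_nonneg hv0]; exact hv
  have := hasSum_binomial (r : ℂ) (by simpa using hr) habs
  convert this using 2 with k
  · rw [show ((r : ℂ) + (k : ℂ)) = (((r + k : ℝ)) : ℂ) by push_cast; ring, Complex.Gamma_ofReal]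
    push_cast; ring
  · rw [show ((1 : ℂ) - (v : ℂ)) = (((1 - v : ℝ)) : ℂ) by push_cast; ring,
      show (-(r : ℂ)) = ((-r : ℝ) : ℂ) by push_cast; ring,
      ← Complex.ofReal_cpow (by linarith), Complex.Gamma_ofReal]
    push_cast; ring

/-- The confluent hypergeometric function `₁F₁(a, b, x)` as a power series. -/
noncomputable def F11 (a b x : ℂ) : ℂ :=
  ∑' n : ℕ, (Complex.Gamma (a + n) / Complex.Gamma a) /
    (Complex.Gamma (b + n) / Complex.Gamma b) * x^n / (n.factorial : ℂ)

theorem confluent_generating_function (α β x z : ℂ)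
    (hα : 0 < α.re) (hβ : α.re < β.re) (hz : ‖z‖ < 1) :
    ∑' k : ℕ, (Complex.Gamma ((k:ℂ) + α) / Complex.Gamma ((k:ℂ) + 1)) *
        F11 (α + k) β x * z^k =
      (1 - z)^(-α) * Complex.Gamma α * F11 α β (x / (1 - z)) := by
  have hb : 0 < β.re := lt_trans hα hβ
  have h1z : (1 : ℂ) - z ≠ 0 := by
    intro hc
    have hz1 : z = 1 := by linear_combination -hc
    rw [hz1] at hz; simp at hz
  have hΓα : Complex.Gamma α ≠ 0 := Complex.Gamma_ne_zero_of_re_pos hα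
  have hΓβ : Complex.Gamma β ≠ 0 := Complex.Gamma_ne_zero_of_re_pos hb
  have hre_an : ∀ n : ℕ, 0 < (α + (n : ℂ)).re := fun n => by
    simp only [Complex.add_re, Complex.natCast_re]; positivity
  have hre_bn : ∀ n : ℕ, 0 < (β + (n : ℂ)).re := fun n => by
    simp only [Complex.add_re, Complex.natCast_re]; positivity
  have hΓαn : ∀ n : ℕ, Complex.Gamma (α + n) ≠ 0 :=
    fun n => Complex.Gamma_ne_zero_of_re_pos (hre_an n)
  have hΓβn : ∀ n : ℕ, Complex.Gamma (β + n) ≠ 0 :=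
    fun n => Complex.Gamma_ne_zero_of_re_pos (hre_bn n)
  set v : ℝ := ‖z‖ with hvdef
  set w : ℝ := ‖x‖ with hwdef
  have hv0 : 0 ≤ v := norm_nonneg z
  have hw0 : 0 ≤ w := norm_nonneg x
  have h1v : 0 < 1 - v := by linarith
  set r : ℝ := α.re with hrdef
  set b : ℝ := β.re with hbdef
  -- the coefficient and the double-indexed summand
  set C : ℕ → ℂ := fun n =>
    Complex.Gamma β / Complex.Gamma (β + n) * x ^ n / (n.factorial : ℂ) with hCdef
  set g : ℕ → ℕ → ℂ := fun k n =>
    Complex.Gamma (α + n + k) / (k.factorial : ℂ) * z ^ k * C n with hgdef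
  -- the real majorant
  set M : ℕ → ℕ → ℝ := fun k n =>
    Real.Gamma (r + n + k) / (k.factorial : ℝ) * v ^ k *
      (Real.Gamma b / Real.Gamma (b + n) * w ^ n / (n.factorial : ℝ)) with hMdef
  set SM : ℕ → ℝ := fun n => Real.Gamma (r + n) * (1 - v) ^ (-(r + (n : ℝ))) *
      (Real.Gamma b / Real.Gamma (b + n) * w ^ n / (n.factorial : ℝ)) with hSMdef
  -- norm bound
  have hβbound : ∀ n : ℕ, ‖Complex.Gamma β‖ / ‖Complex.Gamma (β + n)‖ ≤
      Real.Gamma b / Real.Gamma (b + n) := by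
    intro n
    have hprod : ∏ j ∈ Finset.range n, (b + (j : ℝ)) ≤
        ‖∏ j ∈ Finset.range n, (β + (j : ℂ))‖ := by
      rw [norm_prod]
      refine Finset.prod_le_prod (fun j _ => by positivity) (fun j _ => ?_)
      have : (β + (j : ℂ)).re ≤ ‖β + j‖ := Complex.re_le_norm _
      simpa using this
    have habsΓβ : 0 < ‖Complex.Gamma β‖ := by
      simpa [norm_pos_iff] using hΓβ
    have hprodpos : 0 < ∏ j ∈ Finset.range n, (b + (j : ℝ)) :=
      Finset.prod_pos (fun j _ => by positivity)
    have hΓb : 0 < Real.Gamma b := Real.Gamma_pos_of_pos hb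
    rw [cgamma_add_nat β hb n, rgamma_add_nat b hb n, norm_mul]
    calc ‖Complex.Gamma β‖ /
          (‖Complex.Gamma β‖ * ‖∏ j ∈ Finset.range n, (β + (j:ℂ))‖)
        = 1 / ‖∏ j ∈ Finset.range n, (β + (j:ℂ))‖ := by
          rw [div_mul_eq_div_div, div_self habsΓβ.ne']
      _ ≤ 1 / (∏ j ∈ Finset.range n, (b + (j:ℝ))) := by
          apply one_div_le_one_div_of_le hprodpos hprod
      _ = Real.Gamma b / (Real.Gamma b * ∏ j ∈ Finset.range n, (b + (j:ℝ))) := by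
          rw [div_mul_eq_div_div, div_self hΓb.ne']
  have hM : ∀ k n : ℕ, ‖g k n‖ ≤ M k n := by
    intro k n
    have h1 : ‖g k n‖ = ‖Complex.Gamma (α + n + k)‖ / (k.factorial : ℝ)
        * v ^ k * (‖Complex.Gamma β‖ / ‖Complex.Gamma (β + n)‖
          * w ^ n / (n.factorial : ℝ)) := by
      simp [hgdef, hCdef, norm_mul, norm_div, norm_pow, Complex.norm_natCast]
      rfl
    have hA : ‖Complex.Gamma (α + n + k)‖ ≤ Real.Gamma (r + n + k) := by
      have := abs_cgamma_le (α + n + k) (by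
        simp only [Complex.add_re, Complex.natCast_re]; positivity)
      simpa [Complex.add_re, Complex.natCast_re] using this
    rw [h1, hMdef]
    have h2 : ‖Complex.Gamma β‖ / ‖Complex.Gamma (β + n)‖
          * w ^ n / (n.factorial : ℝ) ≤ Real.Gamma b / Real.Gamma (b + n) * w ^ n
          / (n.factorial : ℝ) := by
      gcongr ?_ * _ / _
      exact hβbound n
    have h3 : ‖Complex.Gamma (α + n + k)‖ / (k.factorial : ℝ) * v ^ k ≤
        Real.Gamma (r + n + k) / (k.factorial : ℝ) * v ^ k := by gcongr
    exact mul_le_mul h3 h2 (by positivity) (by positivity)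
  have hMsum : ∀ n : ℕ, HasSum (fun k => M k n) (SM n) := by
    intro n
    simp only [hSMdef, hMdef]
    exact (hasSum_binomial_real (r + n) (by positivity) hv0 hz).mul_right _
  have hSMnonneg : ∀ n, 0 ≤ SM n := by
    intro n
    have h1 : 0 < Real.Gamma (r + n) := Real.Gamma_pos_of_pos (by positivity)
    have h2 : 0 < Real.Gamma (b + n) := Real.Gamma_pos_of_pos (by positivity)
    have h3 : 0 < Real.Gamma b := Real.Gamma_pos_of_pos hb
    have h4 : (0:ℝ) < (1 - v) ^ (-(r + (n:ℝ))) := Real.rpow_pos_of_pos h1v _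
    exact mul_nonneg (mul_nonneg h1.le h4.le)
      (div_nonneg (mul_nonneg (div_nonneg h3.le h2.le) (pow_nonneg hw0 n)) (Nat.cast_nonneg _))
  have hΓbpos : 0 < Real.Gamma b := Real.Gamma_pos_of_pos hb
  have hrpow : ∀ m : ℕ, (1 - v) ^ (-(r + (m:ℝ))) = (1 - v) ^ (-r) * ((1 - v)⁻¹) ^ m := by
    intro m
    rw [show -(r + (m:ℝ)) = -r + -(m:ℝ) by ring, Real.rpow_add h1v,
      Real.rpow_neg h1v.le (m:ℝ), Real.rpow_natCast, inv_pow]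
  set q : ℝ := w / (1 - v) with hqdef
  have hq0 : 0 ≤ q := by positivity
  have hSMsummable : Summable SM := by
    rw [← summable_nat_add_iff 2]
    refine Summable.of_nonneg_of_le (fun n => hSMnonneg _) (fun n => ?_)
      (((Real.summable_pow_div_factorial q).mul_left
        (Real.Gamma b * (1 - v) ^ (-r) * q ^ 2)))
    have hmono : Real.Gamma (r + ((n+2:ℕ):ℝ)) ≤ Real.Gamma (b + ((n+2:ℕ):ℝ)) := by
      have hn0 : (0:ℝ) ≤ (n:ℝ) := Nat.cast_nonneg n
      refine Real.Gamma_strictMonoOn_Ici.monotoneOn ?_ ?_ ?_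
      · refine Set.mem_Ici.mpr ?_
        push_cast; linarith
      · refine Set.mem_Ici.mpr ?_
        push_cast; linarith
      · have : r ≤ b := le_of_lt hβ
        linarith
    have hfact : (n.factorial : ℝ) ≤ ((n+2).factorial : ℝ) :=
      Nat.cast_le.mpr (Nat.factorial_le (by omega))
    have hfn : (0:ℝ) < (n.factorial : ℝ) := by positivity
    have hΓr2 : 0 < Real.Gamma (r + ((n+2:ℕ):ℝ)) := Real.Gamma_pos_of_pos (by positivity)
    have hΓb2 : 0 < Real.Gamma (b + ((n+2:ℕ):ℝ)) := Real.Gamma_pos_of_pos (by positivity)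
    calc SM (n+2)
        = Real.Gamma (r + ((n+2:ℕ):ℝ)) * ((1 - v) ^ (-r) * ((1 - v)⁻¹) ^ (n+2)) *
          (Real.Gamma b / Real.Gamma (b + ((n+2:ℕ):ℝ)) * w ^ (n+2) /
            ((n+2).factorial : ℝ)) := by
          rw [hSMdef]
          simp only
          rw [hrpow (n+2)]
      _ ≤ Real.Gamma (b + ((n+2:ℕ):ℝ)) * ((1 - v) ^ (-r) * ((1 - v)⁻¹) ^ (n+2)) *
          (Real.Gamma b / Real.Gamma (b + ((n+2:ℕ):ℝ)) * w ^ (n+2) /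
            (n.factorial : ℝ)) := by
          gcongr
      _ = Real.Gamma b * (1 - v) ^ (-r) * q ^ 2 * (q ^ n / (n.factorial : ℝ)) := by
          rw [hqdef]
          rw [div_pow, div_pow]
          have h1v' : (1 - v) ≠ 0 := h1v.ne'
          rw [inv_pow]
          field_simp
          ring
  have hM' : ∀ k n : ℕ, ‖g k n‖ ≤ M k n := fun k n => hM k n
  have hgkn_summable : ∀ n, Summable (fun k => ‖g k n‖) := fun n =>
    Summable.of_nonneg_of_le (fun k => norm_nonneg _) (fun k => hM' k n) (hMsum n).summable
  have htsum_le : ∀ n, (∑' k, ‖g k n‖) ≤ SM n := fun n =>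
    (Summable.tsum_le_tsum (fun k => hM' k n) (hgkn_summable n) (hMsum n).summable).trans_eq
      (hMsum n).tsum_eq
  have hnormsum : Summable (fun p : ℕ × ℕ => ‖g p.2 p.1‖) := by
    apply (summable_prod_of_nonneg (fun p => norm_nonneg _)).mpr
    refine ⟨fun n => hgkn_summable n, ?_⟩
    exact Summable.of_nonneg_of_le (fun n => tsum_nonneg fun k => norm_nonneg _)
      htsum_le hSMsummable
  have hswapped : Summable (fun p : ℕ × ℕ => g p.2 p.1) := Summable.of_norm hnormsum
  have hguncurry : Summable (Function.uncurry g) := by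
    have := hswapped.prod_symm
    exact this
  -- the termwise identity for the left-hand side
  have step1 : ∀ k : ℕ, Complex.Gamma ((k:ℂ) + α) / Complex.Gamma ((k:ℂ) + 1) *
      F11 (α + k) β x * z ^ k = ∑' n, g k n := by
    intro k
    have hfk : ((k.factorial : ℕ) : ℂ) ≠ 0 := Nat.cast_ne_zero.mpr k.factorial_ne_zero
    rw [F11, Complex.Gamma_nat_eq_factorial k]
    calc Complex.Gamma ((k:ℂ) + α) / (k.factorial : ℂ) *
          (∑' n : ℕ, (Complex.Gamma (α + k + n) / Complex.Gamma (α + k)) /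
            (Complex.Gamma (β + n) / Complex.Gamma β) * x ^ n / (n.factorial : ℂ)) * z ^ k
        = ∑' n : ℕ, Complex.Gamma ((k:ℂ) + α) / (k.factorial : ℂ) * z ^ k *
            ((Complex.Gamma (α + k + n) / Complex.Gamma (α + k)) /
            (Complex.Gamma (β + n) / Complex.Gamma β) * x ^ n / (n.factorial : ℂ)) := by
          rw [tsum_mul_left]
          ring
      _ = ∑' n, g k n := by
          refine tsum_congr fun n => ?_
          have hfn : ((n.factorial : ℕ) : ℂ) ≠ 0 := Nat.cast_ne_zero.mpr n.factorial_ne_zero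
          simp only [hgdef, hCdef]
          rw [show (k:ℂ) + α = α + k from add_comm _ _,
            show α + (k:ℂ) + n = α + n + k by ring]
          have hcancel : Complex.Gamma (α + (k:ℂ)) * (Complex.Gamma (α + (k:ℂ)))⁻¹ = 1 :=
            mul_inv_cancel₀ (hΓαn k)
          have hΓk := hΓαn k
          field_simp
  have step3 : ∀ n : ℕ, (∑' k, g k n) =
      Complex.Gamma (α + n) * (1 - z) ^ (-(α + (n:ℂ))) * C n := by
    intro n
    exact ((hasSum_binomial (α + n) (hre_an n) hz).mul_right (C n)).tsum_eq
  have step4 : ∀ n : ℕ, Complex.Gamma (α + n) * (1 - z) ^ (-(α + (n:ℂ))) * C n =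
      (1 - z)^(-α) * Complex.Gamma α * ((Complex.Gamma (α + n) / Complex.Gamma α) /
        (Complex.Gamma (β + n) / Complex.Gamma β) * (x / (1-z))^n / (n.factorial : ℂ)) := by
    intro n
    have hfn : ((n.factorial : ℕ) : ℂ) ≠ 0 := Nat.cast_ne_zero.mpr n.factorial_ne_zero
    have hpow : (1 - z)^n ≠ 0 := pow_ne_zero _ h1z
    rw [show -(α + (n:ℂ)) = -α + -(n:ℂ) by ring, Complex.cpow_add _ _ h1z,
      Complex.cpow_neg (1 - z) (n:ℂ), Complex.cpow_natCast, div_pow]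
    simp only [hCdef]
    field_simp
  calc ∑' k : ℕ, Complex.Gamma ((k:ℂ) + α) / Complex.Gamma ((k:ℂ) + 1) *
        F11 (α + k) β x * z ^ k
      = ∑' k, ∑' n, g k n := tsum_congr step1
    _ = ∑' n, ∑' k, g k n := (Summable.tsum_comm hguncurry).symm
    _ = ∑' n : ℕ, Complex.Gamma (α + (n:ℕ)) * (1 - z) ^ (-(α + (n:ℂ))) * C n := tsum_congr step3
    _ = ∑' n : ℕ, (1 - z)^(-α) * Complex.Gamma α *
        ((Complex.Gamma (α + n) / Complex.Gamma α) /
        (Complex.Gamma (β + n) / Complex.Gamma β) * (x / (1-z))^n / (n.factorial : ℂ)) :=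
        tsum_congr step4
    _ = (1 - z)^(-α) * Complex.Gamma α * F11 α β (x / (1 - z)) := by
        rw [F11, tsum_mul_left]
end

section
/- For 0 < Re(s) < Re(α) and Re(β) > Re(α) > 0, ∫₀^∞ p^{s-1} ₁F₁(α, β, -p) dp = (Γ(α-s) Γ(β) Γ(s))/(Γ(α) Γ(β-s)). -/
open Complex MeasureTheory

open Set

private lemma norm_cpow_real {x : ℝ} (hx : 0 < x) (y : ℂ) : ‖(x:ℂ) ^ y‖ = x ^ y.re := by
  rw [Complex.norm_cpow_eq_rpow_re_of_pos hx]

private lemma beta_integrable {u v : ℂ} (hu : 0 < u.re) (hv : 0 < v.re) :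
    IntegrableOn (fun t : ℝ => (t:ℂ) ^ (u-1) * ((1:ℂ) - t) ^ (v-1)) (Ioo 0 1) :=
  (intervalIntegrable_iff_integrableOn_Ioo_of_le zero_le_one).mp
    (Complex.betaIntegral_convergent hu hv)

private lemma beta_value {u v : ℂ} (hu : 0 < u.re) (hv : 0 < v.re) :
    ∫ t in Ioo (0:ℝ) 1, (t:ℂ) ^ (u-1) * ((1:ℂ) - t) ^ (v-1)
      = Complex.Gamma u * Complex.Gamma v / Complex.Gamma (u+v) := by
  have h := Complex.Gamma_mul_Gamma_eq_betaIntegral hu hv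
  have hne : Complex.Gamma (u+v) ≠ 0 :=
    Complex.Gamma_ne_zero_of_re_pos (by rw [Complex.add_re]; positivity)
  have hbeta : Complex.betaIntegral u v
      = ∫ t in Ioo (0:ℝ) 1, (t:ℂ)^(u-1) * ((1:ℂ)-t)^(v-1) := by
    rw [Complex.betaIntegral, intervalIntegral.integral_of_le zero_le_one,
      MeasureTheory.integral_Ioc_eq_integral_Ioo]
  rw [← hbeta, eq_div_iff hne, mul_comm]
  exact h.symm

private lemma norm_beta_integrand {u v : ℂ} {t : ℝ} (ht : t ∈ Ioo (0:ℝ) 1) :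
    ‖(t:ℂ)^(u-1) * ((1:ℂ)-t)^(v-1)‖ = t ^ (u.re - 1) * (1-t) ^ (v.re - 1) := by
  have h1 : ((1:ℂ) - t) = ((1 - t : ℝ) : ℂ) := by push_cast; ring
  rw [norm_mul, norm_cpow_real ht.1, h1, norm_cpow_real (by linarith [ht.2] : (0:ℝ) < 1 - t)]
  simp [Complex.sub_re, Complex.one_re]

private lemma int_cpow_exp {c : ℂ} (hc : 0 < c.re) {t : ℝ} (ht : 0 < t) :
    IntegrableOn (fun p : ℝ => (p:ℂ) ^ (c-1) * Complex.exp (-((p:ℂ) * t))) (Set.Ioi 0) := by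
  have hre : IntegrableOn (fun p : ℝ => p ^ (c.re - 1) * Real.exp (-t * p)) (Set.Ioi 0) := by
    have := integrableOn_rpow_mul_exp_neg_mul_rpow (s := c.re - 1) (p := 1)
      (by linarith) zero_lt_one ht
    simpa [Real.rpow_natCast, Real.rpow_one] using this
  apply Integrable.mono' hre ?_ ?_
  · apply ContinuousOn.aestronglyMeasurable ?_ measurableSet_Ioi
    apply ContinuousOn.mul
    · refine ContinuousOn.cpow (Complex.continuous_ofReal.continuousOn) continuousOn_const ?_
      intro a ha
      rw [Complex.mem_slitPlane_iff]
      exact Or.inl (by simpa using ha)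
    · exact (Complex.continuous_exp.comp (by continuity)).continuousOn
  · filter_upwards [ae_restrict_mem measurableSet_Ioi] with p hp
    rw [norm_mul, norm_cpow_real hp]
    have h2 : (-((p:ℂ) * t)) = ((-t * p : ℝ) : ℂ) := by push_cast; ring
    rw [h2, Complex.norm_exp]
    simp

private lemma rep {α β : ℂ} (hα : 0 < α.re) (hβα : 0 < (β - α).re) (p : ℝ) (hp : 0 ≤ p) :
    ∫ t in Ioo (0:ℝ) 1, (t:ℂ)^(α-1) * ((1:ℂ) - t)^(β-α-1) * Complex.exp (-((p:ℂ) * t))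
      = Complex.Gamma α * Complex.Gamma (β-α) / Complex.Gamma β * F11 α β (-(p:ℂ)) := by
  have hβ : 0 < β.re := by
    have := hβα; rw [Complex.sub_re] at this; linarith
  set F : ℕ → ℝ → ℂ := fun n t =>
    ((t:ℂ)^(α + n - 1) * ((1:ℂ)-t)^(β-α-1)) * ((-(p:ℂ))^n / n.factorial) with hF
  have hren : ∀ n : ℕ, 0 < (α + (n:ℂ)).re := fun n => by
    rw [Complex.add_re, Complex.natCast_re]; positivity
  have hFint : ∀ n, IntegrableOn (F n) (Ioo 0 1) := fun n =>
    (beta_integrable (hren n) hβα).mul_const _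
  have hGint : IntegrableOn
      (fun t : ℝ => ‖(t:ℂ)^(α-1) * ((1:ℂ)-t)^(β-α-1)‖) (Ioo 0 1) :=
    (beta_integrable hα hβα).norm
  have hnorm_le : ∀ n : ℕ, ∀ t ∈ Ioo (0:ℝ) 1,
      ‖F n t‖ ≤ ‖(t:ℂ)^(α-1) * ((1:ℂ)-t)^(β-α-1)‖ * (p^n / n.factorial) := by
    intro n t ht
    have e1 : ‖F n t‖ = t ^ (α.re + n - 1) * ‖((1:ℂ)-t)^(β-α-1)‖ * (p^n / n.factorial) := by
      simp only [hF, norm_mul, norm_div, norm_pow, norm_neg]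
      rw [norm_cpow_real ht.1, Complex.norm_real, Real.norm_eq_abs,
        _root_.abs_of_nonneg hp, Complex.norm_natCast,
        show (α + (n:ℂ) - 1).re = α.re + n - 1 by
          simp [Complex.add_re, Complex.sub_re, Complex.natCast_re]]
    have e2 : ‖(t:ℂ)^(α-1) * ((1:ℂ)-t)^(β-α-1)‖
        = t ^ (α.re - 1) * ‖((1:ℂ)-t)^(β-α-1)‖ := by
      rw [norm_mul, norm_cpow_real ht.1,
        show (α - 1).re = α.re - 1 by simp [Complex.sub_re, Complex.one_re]]
    rw [e1, e2]
    have hle : t ^ (α.re + n - 1) ≤ t ^ (α.re - 1) :=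
      Real.rpow_le_rpow_of_exponent_ge ht.1 ht.2.le
        (by have : (0:ℝ) ≤ n := Nat.cast_nonneg n; linarith)
    have h0 : (0:ℝ) ≤ p^n / n.factorial := by positivity
    gcongr
  have hsum : Summable (fun n : ℕ => ∫ t in Ioo (0:ℝ) 1, ‖F n t‖) := by
    refine Summable.of_nonneg_of_le
      (fun n => integral_nonneg (fun t => norm_nonneg _)) (fun n => ?_)
      ((Real.summable_pow_div_factorial p).mul_left
        (∫ t in Ioo (0:ℝ) 1, ‖(t:ℂ)^(α-1) * ((1:ℂ)-t)^(β-α-1)‖))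
    calc ∫ t in Ioo (0:ℝ) 1, ‖F n t‖
        ≤ ∫ t in Ioo (0:ℝ) 1,
            ‖(t:ℂ)^(α-1) * ((1:ℂ)-t)^(β-α-1)‖ * (p^n / n.factorial) :=
          setIntegral_mono_on (hFint n).norm (hGint.mul_const _)
            measurableSet_Ioo (hnorm_le n)
      _ = (∫ t in Ioo (0:ℝ) 1, ‖(t:ℂ)^(α-1) * ((1:ℂ)-t)^(β-α-1)‖) * (p^n / n.factorial) :=
          integral_mul_const _ _
  have key := MeasureTheory.integral_tsum_of_summable_integral_norm
    (μ := volume.restrict (Ioo (0:ℝ) 1)) hFint hsum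
  have hpt : ∀ t ∈ Ioo (0:ℝ) 1,
      (t:ℂ)^(α-1) * ((1:ℂ)-t)^(β-α-1) * Complex.exp (-((p:ℂ) * t)) = ∑' n, F n t := by
    intro t ht
    have htne : (t:ℂ) ≠ 0 := Complex.ofReal_ne_zero.mpr ht.1.ne'
    have hexp : Complex.exp (-((p:ℂ) * t)) = ∑' n : ℕ, (-((p:ℂ) * t))^n / n.factorial := by
      rw [Complex.exp_eq_exp_ℂ, NormedSpace.exp_eq_tsum_div]
    rw [hexp, ← tsum_mul_left]
    refine tsum_congr fun n => ?_
    have h1 : (t:ℂ)^(α + n - 1) = (t:ℂ)^(α-1) * (t:ℂ)^(n:ℕ) := by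
      rw [← Complex.cpow_natCast, ← Complex.cpow_add _ _ htne]
      congr 1; ring
    have h2 : (-((p:ℂ) * t))^n = (-(p:ℂ))^n * (t:ℂ)^(n:ℕ) := by
      rw [← neg_mul, mul_pow]
    rw [hF]
    simp only
    rw [h1, h2]
    ring
  calc ∫ t in Ioo (0:ℝ) 1, (t:ℂ)^(α-1) * ((1:ℂ)-t)^(β-α-1) * Complex.exp (-((p:ℂ) * t))
      = ∫ t in Ioo (0:ℝ) 1, ∑' n, F n t :=
        setIntegral_congr_fun measurableSet_Ioo (fun t ht => hpt t ht)
    _ = ∑' n, ∫ t in Ioo (0:ℝ) 1, F n t := key.symm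
    _ = ∑' n : ℕ, Complex.Gamma (α+n) * Complex.Gamma (β-α) / Complex.Gamma (β+n)
          * ((-(p:ℂ))^n / n.factorial) := by
        refine tsum_congr fun n => ?_
        rw [show (∫ t in Ioo (0:ℝ) 1, F n t)
            = (∫ t in Ioo (0:ℝ) 1, (t:ℂ)^(α + n - 1) * ((1:ℂ)-t)^(β-α-1))
              * ((-(p:ℂ))^n / n.factorial) from integral_mul_const _ _]
        rw [beta_value (hren n) hβα, show α + (n:ℂ) + (β - α) = β + n by ring]
    _ = Complex.Gamma α * Complex.Gamma (β-α) / Complex.Gamma β * F11 α β (-(p:ℂ)) := by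
        rw [F11, ← tsum_mul_left]
        refine tsum_congr fun n => ?_
        have hΓα : Complex.Gamma α ≠ 0 := Complex.Gamma_ne_zero_of_re_pos hα
        have hΓβ : Complex.Gamma β ≠ 0 := Complex.Gamma_ne_zero_of_re_pos hβ
        have hΓβn : Complex.Gamma (β + n) ≠ 0 := Complex.Gamma_ne_zero_of_re_pos
          (by rw [Complex.add_re, Complex.natCast_re]; positivity)
        have hfac : ((n.factorial : ℂ)) ≠ 0 := by
          exact_mod_cast Nat.cast_ne_zero.mpr n.factorial_ne_zero
        field_simp [hΓα, hΓβ, hΓβn]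

theorem confluent_mellin_transform (α β s : ℂ)
    (hs0 : 0 < s.re) (hsα : s.re < α.re) (hαβ : α.re < β.re) (hα : 0 < α.re) :
    ∫ p in Set.Ioi (0:ℝ), (p:ℂ)^(s - 1) * F11 α β (-(p:ℂ)) =
      (Complex.Gamma (α - s) * Complex.Gamma β * Complex.Gamma s) /
        (Complex.Gamma α * Complex.Gamma (β - s)) := by
  have hβα : 0 < (β - α).re := by rw [Complex.sub_re]; linarith
  have hβ : 0 < β.re := lt_trans hα hαβ
  have hαs : 0 < (α - s).re := by rw [Complex.sub_re]; linarith
  have hβs : 0 < (β - s).re := by rw [Complex.sub_re]; linarith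
  have hΓα : Complex.Gamma α ≠ 0 := Complex.Gamma_ne_zero_of_re_pos hα
  have hΓβ : Complex.Gamma β ≠ 0 := Complex.Gamma_ne_zero_of_re_pos hβ
  have hΓβα : Complex.Gamma (β - α) ≠ 0 := Complex.Gamma_ne_zero_of_re_pos hβα
  have hΓβs : Complex.Gamma (β - s) ≠ 0 := Complex.Gamma_ne_zero_of_re_pos hβs
  set f : ℝ → ℝ → ℂ := fun p t =>
    (p:ℂ)^(s-1) * ((t:ℂ)^(α-1) * ((1:ℂ)-t)^(β-α-1) * Complex.exp (-((p:ℂ) * t))) with hf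
  set C : ℂ := Complex.Gamma β / (Complex.Gamma α * Complex.Gamma (β-α)) with hC
  -- Step 1: replace F11 by the Euler integral
  have step1 : ∫ p in Set.Ioi (0:ℝ), (p:ℂ)^(s - 1) * F11 α β (-(p:ℂ))
      = C * ∫ p in Set.Ioi (0:ℝ), ∫ t in Ioo (0:ℝ) 1, f p t := by
    rw [← MeasureTheory.integral_const_mul _ _]
    refine setIntegral_congr_fun measurableSet_Ioi (fun p hp => ?_)
    have hrep := rep hα hβα p (le_of_lt hp)
    have hin : ∫ t in Ioo (0:ℝ) 1, f p t
        = (p:ℂ)^(s-1) * ∫ t in Ioo (0:ℝ) 1,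
            (t:ℂ)^(α-1) * ((1:ℂ)-t)^(β-α-1) * Complex.exp (-((p:ℂ) * t)) := by
      rw [← MeasureTheory.integral_const_mul _ _]
    rw [hin, hrep, hC]
    field_simp
  -- Step 2: integrability for Fubini
  have hInt : Integrable (Function.uncurry f)
      ((volume.restrict (Set.Ioi (0:ℝ))).prod (volume.restrict (Ioo (0:ℝ) 1))) := by
    have hmeas : AEStronglyMeasurable (Function.uncurry f)
        ((volume.restrict (Set.Ioi (0:ℝ))).prod (volume.restrict (Ioo (0:ℝ) 1))) := by
      rw [Measure.prod_restrict]
      refine ContinuousOn.aestronglyMeasurable ?_ (measurableSet_Ioi.prod measurableSet_Ioo)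
      apply ContinuousOn.mul
      · refine ContinuousOn.cpow
          ((Complex.continuous_ofReal.comp continuous_fst).continuousOn)
          continuousOn_const ?_
        rintro ⟨p, t⟩ hq
        rw [Complex.mem_slitPlane_iff]
        exact Or.inl (by simpa using hq.1)
      · apply ContinuousOn.mul
        · apply ContinuousOn.mul
          · refine ContinuousOn.cpow
              ((Complex.continuous_ofReal.comp continuous_snd).continuousOn)
              continuousOn_const ?_
            rintro ⟨p, t⟩ hq
            rw [Complex.mem_slitPlane_iff]
            exact Or.inl (by simpa using hq.2.1)
          · refine ContinuousOn.cpow ?_ continuousOn_const ?_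
            · exact (continuous_const.sub
                (Complex.continuous_ofReal.comp continuous_snd)).continuousOn
            · rintro ⟨p, t⟩ hq
              rw [Complex.mem_slitPlane_iff]
              left
              simp only [Complex.sub_re, Complex.one_re, Complex.ofReal_re]
              have := hq.2.2
              simpa using by linarith [hq.2.2]
        · exact (Complex.continuous_exp.comp (by continuity)).continuousOn
    refine (integrable_prod_iff' hmeas).mpr ⟨?_, ?_⟩
    · filter_upwards [ae_restrict_mem measurableSet_Ioo] with t ht
      have heq : (fun p : ℝ => Function.uncurry f (p, t))
          = fun p : ℝ => ((t:ℂ)^(α-1) * ((1:ℂ)-t)^(β-α-1))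
              * ((p:ℂ)^(s-1) * Complex.exp (-((p:ℂ) * t))) := by
        funext p
        simp only [Function.uncurry, hf]
        ring
      rw [heq]
      exact (int_cpow_exp hs0 ht.1).const_mul _
    · have hg : IntegrableOn
          (fun t : ℝ => ‖(t:ℂ)^(α-s-1) * ((1:ℂ)-t)^(β-α-1)‖ * Real.Gamma s.re)
          (Ioo 0 1) := (beta_integrable hαs hβα).norm.mul_const _
      refine hg.congr ?_
      filter_upwards [ae_restrict_mem measurableSet_Ioo] with t ht
      have hval : ∫ p in Set.Ioi (0:ℝ), ‖Function.uncurry f (p, t)‖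
          = ‖(t:ℂ)^(α-1) * ((1:ℂ)-t)^(β-α-1)‖
            * ((1/t) ^ s.re * Real.Gamma s.re) := by
        rw [← Real.integral_rpow_mul_exp_neg_mul_Ioi hs0 ht.1, ← MeasureTheory.integral_const_mul _ _]
        refine setIntegral_congr_fun measurableSet_Ioi (fun p hp => ?_)
        simp only [Function.uncurry, hf]
        rw [norm_mul, norm_cpow_real hp, norm_mul,
          show ‖Complex.exp (-((p:ℂ) * t))‖ = Real.exp (-(t * p)) by
            rw [show (-((p:ℂ) * t)) = ((-(t * p) : ℝ) : ℂ) by push_cast; ring,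
              Complex.norm_exp, Complex.ofReal_re],
          show (s - 1).re = s.re - 1 by simp [Complex.sub_re, Complex.one_re]]
        ring
      rw [hval]
      have hnb1 := norm_beta_integrand (u := α) (v := β - α) ht
      have hnb2 := norm_beta_integrand (u := α - s) (v := β - α) ht
      rw [hnb1, hnb2]
      have he : t ^ (α.re - 1) * (1/t) ^ s.re = t ^ ((α - s).re - 1) := by
        rw [one_div, Real.inv_rpow ht.1.le, ← Real.rpow_neg ht.1.le, ← Real.rpow_add ht.1]
        congr 1
        rw [Complex.sub_re]
        ring
      rw [← he]
      ring
  -- Step 3: swap and evaluate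
  have step3 : ∫ p in Set.Ioi (0:ℝ), ∫ t in Ioo (0:ℝ) 1, f p t
      = ∫ t in Ioo (0:ℝ) 1, ∫ p in Set.Ioi (0:ℝ), f p t :=
    integral_integral_swap hInt
  have step4 : ∫ t in Ioo (0:ℝ) 1, ∫ p in Set.Ioi (0:ℝ), f p t
      = (Complex.Gamma (α-s) * Complex.Gamma (β-α) / Complex.Gamma (β-s)) * Complex.Gamma s := by
    have hin2 : ∀ t ∈ Ioo (0:ℝ) 1,
        (∫ p in Set.Ioi (0:ℝ), f p t)
          = ((t:ℂ)^(α-s-1) * ((1:ℂ)-t)^(β-α-1)) * Complex.Gamma s := by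
      intro t ht
      have htne : (t:ℂ) ≠ 0 := Complex.ofReal_ne_zero.mpr ht.1.ne'
      have harg : (↑t : ℂ).arg ≠ Real.pi := by
        rw [Complex.arg_ofReal_of_nonneg ht.1.le]
        exact Ne.symm Real.pi_ne_zero
      have heq : (fun p : ℝ => f p t)
          = fun p : ℝ => ((t:ℂ)^(α-1) * ((1:ℂ)-t)^(β-α-1))
              * ((p:ℂ)^(s-1) * Complex.exp (-((t:ℂ) * p))) := by
        funext p
        simp only [hf]
        rw [show -((p:ℂ) * t) = -((t:ℂ) * p) by ring]
        ring
      rw [heq, MeasureTheory.integral_const_mul _ _, integral_cpow_mul_exp_neg_mul_Ioi hs0 ht.1]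
      have h1 : (1/(t:ℂ))^s = (t:ℂ)^(-s) := by
        rw [one_div, Complex.inv_cpow _ _ harg, ← Complex.cpow_neg]
      have e : (t:ℂ)^(α-1) * (t:ℂ)^(-s) = (t:ℂ)^(α-s-1) := by
        rw [← Complex.cpow_add _ _ htne]
        congr 1; ring
      calc (t:ℂ)^(α-1) * ((1:ℂ)-t)^(β-α-1) * ((1/(t:ℂ))^s * Complex.Gamma s)
          = ((t:ℂ)^(α-1) * (t:ℂ)^(-s)) * ((1:ℂ)-t)^(β-α-1) * Complex.Gamma s := by
            rw [h1]; ring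
        _ = ((t:ℂ)^(α-s-1) * ((1:ℂ)-t)^(β-α-1)) * Complex.Gamma s := by rw [e]
    rw [setIntegral_congr_fun measurableSet_Ioo hin2, integral_mul_const,
      beta_value hαs hβα, show α - s + (β - α) = β - s by ring]
  rw [step1, step3, step4, hC]
  field_simp
end
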